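/- Take P/Q = 1/2 with Farey parents A/B = 0/1, S/T = 1/1, and n = 1, and let a/b be a reduced fraction with 1/2 < a/b < 1. In this setting the block B_{1,m} equals the word 0·1^{m+1} and its increment B′_{1,m} equals 1·0^{m+1}. Suppose the period word of the (purely b-periodic) 01-digit sequence of BL(1/2, a/b, 1) decomposes as the concatenation B_{1,m_1}⋯B_{1,m_k}. Then the real number θ′ with purely periodic binary expansion 0.(B′_{1,m_1}⋯B′_{1,m_k} repeated) equals θ_{10}(1/2, 1 − a/b, 1), the 10-convention mechanical angle of the broken line BL(1/2, 1 − a/b, 1); that is, θ′ = Σ_{j≥1} δ_j·2^{−j} where δ_j = ⌊g(j+1)⌋ − ⌊g(j)⌋ and g(x) = x/2 for 0 ≤ x ≤ 2, g(x) = (1 − a/b)(x − 2) + 1 for x ≥ 2. -/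

import Mathlib

/-- The 01-mechanical digit sequence of `r`: `α_j(r) = ⌈(j+1)r⌉ - ⌈jr⌉`. -/
noncomputable def alpha01 (r : ℚ) (j : ℕ) : ℤ := ⌈((j : ℚ) + 1) * r⌉ - ⌈(j : ℚ) * r⌉

/-- The 10-mechanical digit sequence of `r`: `β_j(r) = ⌊(j+1)r⌋ - ⌊jr⌋`. -/
noncomputable def beta10 (r : ℚ) (j : ℕ) : ℤ := ⌊((j : ℚ) + 1) * r⌋ - ⌊(j : ℚ) * r⌋

/-- The 01-word of `r` of length `q`: `(α_1(r), …, α_q(r))`. -/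
noncomputable def word01 (r : ℚ) (q : ℕ) : List ℤ := (List.range q).map fun i => alpha01 r (i + 1)

/-- The 10-word of `r` of length `q`: `(β_1(r), …, β_q(r))`. -/
noncomputable def word10 (r : ℚ) (q : ℕ) : List ℤ := (List.range q).map fun i => beta10 r (i + 1)

/-- The broken line with slopes `r` (before) and `s` (after) and hinge abscissa `h`. -/
noncomputable def BLfun (r s : ℚ) (h : ℕ) (x : ℚ) : ℚ :=
  if x ≤ (h : ℚ) then r * x else s * (x - h) + r * h

/-- The 01-digit sequence of the broken line: `γ_j = ⌈f(j+1)⌉ - ⌈f(j)⌉`. -/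
noncomputable def gammaBL (r s : ℚ) (h : ℕ) (j : ℕ) : ℤ :=
  ⌈BLfun r s h ((j : ℚ) + 1)⌉ - ⌈BLfun r s h (j : ℚ)⌉

/-- The 10-digit sequence of the broken line: `δ_j = ⌊f(j+1)⌋ - ⌊f(j)⌋`. -/
noncomputable def deltaBL (r s : ℚ) (h : ℕ) (j : ℕ) : ℤ :=
  ⌊BLfun r s h ((j : ℚ) + 1)⌋ - ⌊BLfun r s h (j : ℚ)⌋

/-- The angle `θ_{01}` of the broken line, `Σ_{j≥1} γ_j 2^{-j}`. -/
noncomputable def theta01BL (r s : ℚ) (h : ℕ) : ℝ :=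
  ∑' j : ℕ, (gammaBL r s h (j + 1) : ℝ) / 2 ^ (j + 1)

/-- The angle `θ_{10}` of the broken line, `Σ_{j≥1} δ_j 2^{-j}`. -/
noncomputable def theta10BL (r s : ℚ) (h : ℕ) : ℝ :=
  ∑' j : ℕ, (deltaBL r s h (j + 1) : ℝ) / 2 ^ (j + 1)

/-- `n`-fold concatenation of a word with itself. -/
def wpow (w : List ℤ) (n : ℕ) : List ℤ := (List.replicate n w).flatten

/-- The block `B_{n,m}`: `B_{n,0} = W_{P/Q}` and, for `m ≥ 1`,
`B_{n,m} = W_{P/Q}^n (W_{S/T} W_{P/Q}^{n-1})^{m-1} W_{S/T}`. -/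
def Blk (wP wS : List ℤ) (n m : ℕ) : List ℤ :=
  if m = 0 then wP else wpow wP n ++ wpow (wS ++ wpow wP (n - 1)) (m - 1) ++ wS

/-- Add one (mod 2, with carry to the next entry) to a reversed binary word. -/
def addOneRev : List ℤ → List ℤ
  | [] => []
  | d :: rest => if d = 0 then 1 :: rest else 0 :: addOneRev rest

/-- The word `W′` obtained from `W` by adding `1` in base 2 with carry to the left;
for a binary word that is not all ones this is the word of the same length whose
value as a base-2 integer is one more. -/
def wordSucc (w : List ℤ) : List ℤ := (addOneRev w.reverse).reverse

/-- The real number with purely periodic binary expansion `0.(L repeated)`. -/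
noncomputable def periodicTheta (L : List ℤ) : ℝ :=
  ∑' t : ℕ, (L.getD (t % L.length) 0 : ℝ) / 2 ^ (t + 1)

/-- The list of blocks `B_{n,m_1}, …, B_{n,m_k}`. -/
def blocksOf (wP wS : List ℤ) (n : ℕ) (ms : ℕ → ℕ) (k : ℕ) : List (List ℤ) :=
  (List.range k).map fun i => Blk wP wS n (ms (i + 1))

/-- The list of incremented blocks `B′_{n,m_1}, …, B′_{n,m_k}`. -/
def blocksOf' (wP wS : List ℤ) (n : ℕ) (ms : ℕ → ℕ) (k : ℕ) : List (List ℤ) :=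
  (List.range k).map fun i => wordSucc (Blk wP wS n (ms (i + 1)))


section Aux

lemma wpow_singleton (x : ℤ) (n : ℕ) : wpow [x] n = List.replicate n x := by
  induction n with
  | zero => rfl
  | succ n ih =>
    simp only [wpow, List.replicate_succ, List.flatten_cons] at *
    rw [ih]; rfl

lemma word01_half : word01 ((1 : ℚ)/2) 2 = [0, 1] := by
  have c1 : ⌈(1/2 : ℚ)⌉ = 1 := by norm_num [Int.ceil_eq_iff]
  have c2 : ⌈(3/2 : ℚ)⌉ = 2 := by norm_num [Int.ceil_eq_iff]
  norm_num [word01, alpha01, List.range_succ, c1, c2]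

lemma word01_one : word01 (1 : ℚ) 1 = [1] := by
  norm_num [word01, alpha01, List.range_succ]

lemma Blk_eq_aux (m : ℕ) : Blk [0, 1] [1] 1 m = 0 :: List.replicate (m + 1) 1 := by
  cases m with
  | zero => rfl
  | succ m =>
    simp only [Blk, Nat.succ_ne_zero, if_false, Nat.add_sub_cancel, Nat.sub_self]
    have h0 : wpow ([0, 1] : List ℤ) 0 = [] := rfl
    have h1 : wpow ([0, 1] : List ℤ) 1 = [0, 1] := rfl
    rw [h0, h1, List.append_nil, wpow_singleton, List.append_assoc,
      ← List.replicate_succ']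
    simp [List.replicate_succ]

lemma addOneRev_ones (n : ℕ) (rest : List ℤ) :
    addOneRev (List.replicate n 1 ++ 0 :: rest) = List.replicate n 0 ++ 1 :: rest := by
  induction n with
  | zero => simp [addOneRev]
  | succ n ih => simp [List.replicate_succ, addOneRev, ih]

lemma wordSucc_block (m : ℕ) :
    wordSucc (0 :: List.replicate (m + 1) 1) = 1 :: List.replicate (m + 1) 0 := by
  have h : (0 :: List.replicate (m + 1) 1 : List ℤ).reverse
      = List.replicate (m + 1) 1 ++ 0 :: [] := by
    simp [List.reverse_cons, List.reverse_replicate]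
  rw [wordSucc, h, addOneRev_ones]
  simp [List.reverse_append, List.reverse_replicate]

lemma map_compl_block (m : ℕ) :
    (0 :: List.replicate (m + 1) 1 : List ℤ).map (fun d => 1 - d)
      = 1 :: List.replicate (m + 1) 0 := by
  simp [List.map_replicate]

end Aux

/-- for `P/Q = 1/2` (Farey parents `0/1`, `1/1`), `n = 1`, and a reduced
fraction `1/2 < a/b < 1`: the block `B_{1,m}` is the word `0·1^{m+1}` and `B′_{1,m}` is
`1·0^{m+1}`; and if the period word of the 01-digit sequence of `BL(1/2, a/b, 1)` is
`B_{1,m_1}⋯B_{1,m_k}`, then the real `θ′` with purely periodic binary expansion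
`0.(B′_{1,m_1}⋯B′_{1,m_k})` equals `θ_{10}(1/2, 1 - a/b, 1)`, the 10-convention angle of
the broken line `BL(1/2, 1 - a/b, 1)`. -/
theorem conjugate_angle_half_limb_symmetry
    (a b : ℕ) (hb : 0 < b) (hab : Nat.Coprime a b)
    (h1 : (1 : ℚ) / 2 < (a : ℚ) / b) (h2 : (a : ℚ) / b < 1)
    (k : ℕ) (hk : 1 ≤ k) (ms : ℕ → ℕ)
    (L : List ℤ)
    (hL : L = (blocksOf (word01 ((1 : ℚ) / 2) 2) (word01 (1 : ℚ) 1) 1 ms k).flatten)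
    (hdig : ∀ j : ℕ, 1 ≤ j →
      gammaBL ((1 : ℚ) / 2) ((a : ℚ) / b) 2 j = L.getD ((j - 1) % L.length) 0) :
    (∀ m : ℕ,
      Blk (word01 ((1 : ℚ) / 2) 2) (word01 (1 : ℚ) 1) 1 m = 0 :: List.replicate (m + 1) 1 ∧
      wordSucc (Blk (word01 ((1 : ℚ) / 2) 2) (word01 (1 : ℚ) 1) 1 m) =
        1 :: List.replicate (m + 1) 0) ∧
    periodicTheta ((blocksOf' (word01 ((1 : ℚ) / 2) 2) (word01 (1 : ℚ) 1) 1 ms k).flatten) =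
      theta10BL ((1 : ℚ) / 2) (1 - (a : ℚ) / b) 2 := by
  have hwP := word01_half
  have hwS := word01_one
  have hBlk : ∀ m : ℕ, Blk (word01 ((1 : ℚ) / 2) 2) (word01 (1 : ℚ) 1) 1 m
      = 0 :: List.replicate (m + 1) 1 := by
    intro m; rw [hwP, hwS, Blk_eq_aux]
  refine ⟨fun m => ⟨hBlk m, by rw [hBlk m, wordSucc_block]⟩, ?_⟩
  -- the incremented word list is the complement of L
  set f : ℤ → ℤ := fun d => 1 - d with hf
  have hblocks' : blocksOf' (word01 ((1 : ℚ) / 2) 2) (word01 (1 : ℚ) 1) 1 ms k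
      = (blocksOf (word01 ((1 : ℚ) / 2) 2) (word01 (1 : ℚ) 1) 1 ms k).map (List.map f) := by
    simp only [blocksOf', blocksOf, List.map_map]
    apply List.map_congr_left
    intro i _
    simp only [Function.comp_apply, hBlk, wordSucc_block, hf, map_compl_block]
  have hL' : (blocksOf' (word01 ((1 : ℚ) / 2) 2) (word01 (1 : ℚ) 1) 1 ms k).flatten
      = L.map f := by
    rw [hblocks', hL, List.map_flatten]
  -- L is nonempty
  have hLne : L ≠ [] := by
    rw [hL]
    intro hnil
    rw [List.flatten_eq_nil_iff] at hnil
    have hmem : Blk (word01 ((1 : ℚ) / 2) 2) (word01 (1 : ℚ) 1) 1 (ms 1)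
        ∈ blocksOf (word01 ((1 : ℚ) / 2) 2) (word01 (1 : ℚ) 1) 1 ms k := by
      simp only [blocksOf, List.mem_map]
      exact ⟨0, List.mem_range.mpr (by omega), rfl⟩
    have := hnil _ hmem
    rw [hBlk] at this
    simp at this
  have hlen : 0 < L.length := List.length_pos_iff.mpr hLne
  -- delta = 1 - gamma
  have hdelta : ∀ j : ℕ, deltaBL ((1 : ℚ) / 2) (1 - (a : ℚ) / b) 2 j
      = 1 - gammaBL ((1 : ℚ) / 2) ((a : ℚ) / b) 2 j := by
    intro j
    have hfun : ∀ x : ℚ, BLfun ((1 : ℚ) / 2) (1 - (a : ℚ) / b) 2 x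
        = x - BLfun ((1 : ℚ) / 2) ((a : ℚ) / b) 2 x := by
      intro x; unfold BLfun; split_ifs <;> ring
    have key : ∀ (c : ℤ) (y : ℚ), ⌊(c : ℚ) - y⌋ = c - ⌈y⌉ := by
      intro c y
      rw [sub_eq_add_neg, Int.floor_intCast_add, Int.floor_neg, sub_eq_add_neg]
    unfold deltaBL gammaBL
    rw [hfun, hfun]
    rw [show ((j : ℚ) + 1) - BLfun ((1 : ℚ) / 2) ((a : ℚ) / b) 2 ((j : ℚ) + 1)
        = (((j : ℤ) + 1 : ℤ) : ℚ) - BLfun ((1 : ℚ) / 2) ((a : ℚ) / b) 2 ((j : ℚ) + 1) from by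
      push_cast; ring]
    rw [show ((j : ℚ)) - BLfun ((1 : ℚ) / 2) ((a : ℚ) / b) 2 (j : ℚ)
        = (((j : ℤ) : ℤ) : ℚ) - BLfun ((1 : ℚ) / 2) ((a : ℚ) / b) 2 (j : ℚ) from by
      push_cast; ring]
    rw [key, key]
    ring
  -- termwise equality of the two tsums
  rw [hL', periodicTheta, theta10BL]
  apply tsum_congr
  intro j
  congr 1
  have hlenmap : (L.map f).length = L.length := List.length_map _
  have hjlt : j % L.length < L.length := Nat.mod_lt _ hlen
  have hget : (L.map f).getD (j % (L.map f).length) 0 = f (L.getD (j % L.length) 0) := by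
    rw [hlenmap, List.getD_eq_getElem _ _ (by rw [hlenmap]; exact hjlt),
      List.getD_eq_getElem _ _ hjlt, List.getElem_map]
  rw [hget, hdelta (j + 1), hdig (j + 1) (by omega)]
  simp only [Nat.add_sub_cancel, hf]
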